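/- Let 0 < p ≤ 1 ≤ s < ∞, p < s, λ > n(s/p - 1), and suppose M : R^n → C satisfies the molecule conditions (M1) and (M2) with respect to B = B(0, r). Let N ∈ N with N + 1 < λ/s - n/s'. Then ∫_{R^n} |M(x)| |x|^{N+1} dx ≤ C r^{N + 1 - n(1/p - 1)} for a constant C depending only on n, s, p, λ, N. -/

import Mathlib

open MeasureTheory Metric ENNReal


variable {n : ℕ}

lemma mble_rpow (a : ℝ) : Measurable (fun x : EuclideanSpace ℝ (Fin n) => ENNReal.ofReal (‖x‖ ^ a)) := by
  fun_prop

lemma tail_scale (a : ℝ) {r : ℝ} (hr : 0 < r) :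
    ∫⁻ x in (ball (0 : EuclideanSpace ℝ (Fin n)) r)ᶜ, ENNReal.ofReal (‖x‖ ^ a)
      = ENNReal.ofReal (r ^ ((n : ℝ) + a)) *
        ∫⁻ y in (ball (0 : EuclideanSpace ℝ (Fin n)) 1)ᶜ, ENNReal.ofReal (‖y‖ ^ a) := by
  set E := EuclideanSpace ℝ (Fin n)
  have hmap : Measure.map (fun y : E => r • y) volume
      = ENNReal.ofReal (|(r ^ Module.finrank ℝ E)⁻¹|) • volume :=
    Measure.map_addHaar_smul volume hr.ne'
  have hfr : Module.finrank ℝ E = n := finrank_euclideanSpace_fin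
  set f : E → ℝ≥0∞ := fun x => ENNReal.ofReal (‖x‖ ^ a) with hf
  set g : E → ℝ≥0∞ := ((ball (0:E) r)ᶜ).indicator f with hg
  have hgm : Measurable g := (mble_rpow a).indicator measurableSet_ball.compl
  have key : ∫⁻ y, g (r • y) = ENNReal.ofReal ((r ^ n)⁻¹) * ∫⁻ x, g x := by
    rw [← lintegral_map hgm (measurable_const_smul r), hmap, hfr,
      abs_of_pos (by positivity), lintegral_smul_measure, smul_eq_mul]
  have hcomp : (fun y : E => g (r • y)) =
      fun y => ENNReal.ofReal (r ^ a) * ((ball (0:E) 1)ᶜ).indicator f y := by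
    funext y
    have hnorm : ‖r • y‖ = r * ‖y‖ := by
      rw [norm_smul, Real.norm_eq_abs, abs_of_pos hr]
    by_cases hy : y ∈ ball (0:E) 1
    · have : r • y ∈ ball (0:E) r := by
        simp only [mem_ball, dist_zero_right] at hy ⊢
        rw [hnorm]; nlinarith
      simp [hg, Set.indicator_of_notMem, this, hy]
    · have h2 : r • y ∉ ball (0:E) r := by
        simp only [mem_ball, dist_zero_right] at hy ⊢
        rw [not_lt] at hy ⊢
        rw [hnorm]; nlinarith
      have hy1 : (1:ℝ) ≤ ‖y‖ := by simpa [mem_ball, dist_zero_right, not_lt] using hy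
      simp only [hg, Set.indicator_of_mem (Set.mem_compl h2),
        Set.indicator_of_mem (Set.mem_compl hy), hf, hnorm]
      rw [Real.mul_rpow hr.le (norm_nonneg y), ENNReal.ofReal_mul (by positivity)]
  calc ∫⁻ x in (ball (0:E) r)ᶜ, f x = ∫⁻ x, g x := by
        rw [hg, lintegral_indicator measurableSet_ball.compl]
    _ = ENNReal.ofReal (r ^ n) * ∫⁻ y, g (r • y) := by
        rw [key, ← mul_assoc, ← ENNReal.ofReal_mul (by positivity),
          mul_inv_cancel₀ (by positivity), ENNReal.ofReal_one, one_mul]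
    _ = ENNReal.ofReal (r ^ n) * (ENNReal.ofReal (r ^ a) *
          ∫⁻ y in (ball (0:E) 1)ᶜ, f y) := by
        rw [hcomp, lintegral_const_mul _ ((mble_rpow a).indicator measurableSet_ball.compl),
          lintegral_indicator measurableSet_ball.compl]
    _ = _ := by
        rw [← mul_assoc, ← ENNReal.ofReal_mul (by positivity), ← Real.rpow_natCast r n,
          ← Real.rpow_add hr]

lemma tail_finite {n : ℕ} {a : ℝ} (ha : a < -(n:ℝ)) :
    ∫⁻ y in (ball (0 : EuclideanSpace ℝ (Fin n)) 1)ᶜ, ENNReal.ofReal (‖y‖ ^ a) ≠ ∞ := by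
  set E := EuclideanSpace ℝ (Fin n)
  have hb : ∫⁻ y in (ball (0:E) 1)ᶜ, ENNReal.ofReal (‖y‖ ^ a)
      ≤ ∫⁻ y : E, ENNReal.ofReal (2 ^ (-a)) * ENNReal.ofReal ((1 + ‖y‖) ^ a) := by
    refine le_trans (setLIntegral_mono' measurableSet_ball.compl (fun y hy => ?_))
      (setLIntegral_le_lintegral _ _)
    have hy1 : (1:ℝ) ≤ ‖y‖ := by simpa [mem_ball, dist_zero_right, not_lt] using hy
    have hy0 : (0:ℝ) < ‖y‖ := by linarith
    rw [← ENNReal.ofReal_mul (by positivity)]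
    apply ENNReal.ofReal_le_ofReal
    have h1 : (1 + ‖y‖) ^ a ≥ (2 * ‖y‖) ^ a :=
      Real.rpow_le_rpow_of_nonpos (by positivity) (by linarith) (by nlinarith [Nat.cast_nonneg (α := ℝ) n])
    have h2 : (2 * ‖y‖ : ℝ) ^ a = 2 ^ a * ‖y‖ ^ a := Real.mul_rpow (by norm_num) hy0.le
    have h3 : (2:ℝ) ^ (-a) * 2 ^ a = 1 := by
      rw [← Real.rpow_add (by norm_num)]; simp
    nlinarith [Real.rpow_nonneg (norm_nonneg y) a, Real.rpow_pos_of_pos (show (0:ℝ)<2 by norm_num) (-a)]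
  refine ne_of_lt (lt_of_le_of_lt hb ?_)
  rw [lintegral_const_mul _ (by fun_prop)]
  have := finite_integral_one_add_norm (E := E) (μ := volume) (r := -a)
    (by rw [finrank_euclideanSpace_fin]; linarith)
  simp only [neg_neg] at this
  exact ENNReal.mul_lt_top ENNReal.ofReal_lt_top this

theorem stmt14 (n : ℕ) (p s l : ℝ) (N : ℕ)
    (hp : 0 < p) (hp1 : p ≤ 1) (hs : 1 ≤ s) (hps : p < s)
    (hl : (n : ℝ) * (s / p - 1) < l)
    (hN : (N : ℝ) + 1 < l / s - (n : ℝ) * (1 - 1 / s)) :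
    ∃ C : ℝ, 0 < C ∧
      ∀ (M : EuclideanSpace ℝ (Fin n) → ℂ) (r : ℝ), 0 < r → Measurable M →
        (∫⁻ x in ball (0 : EuclideanSpace ℝ (Fin n)) r, (‖M x‖₊ : ℝ≥0∞) ^ s) ^ (1 / s)
          ≤ ENNReal.ofReal (r ^ ((n : ℝ) * (1 / s - 1 / p))) →
        (∫⁻ x in (ball (0 : EuclideanSpace ℝ (Fin n)) r)ᶜ,
            (‖M x‖₊ : ℝ≥0∞) ^ s * ENNReal.ofReal (‖x‖ ^ l)) ^ (1 / s)
          ≤ ENNReal.ofReal (r ^ (l / s + (n : ℝ) * (1 / s - 1 / p))) →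
        ∫⁻ x, (‖M x‖₊ : ℝ≥0∞) * ENNReal.ofReal (‖x‖ ^ ((N : ℝ) + 1))
          ≤ ENNReal.ofReal (C * r ^ ((N : ℝ) + 1 - (n : ℝ) * (1 / p - 1))) := by
  set E := EuclideanSpace ℝ (Fin n)
  set Nr : ℝ := (N : ℝ) + 1 with hNr
  have hNr0 : 0 < Nr := by positivity
  set T : ℝ := Nr - (n : ℝ) * (1 / p - 1) with hT
  have hs0 : 0 < s := lt_of_lt_of_le one_pos hs
  -- reduce to an ℝ≥0∞ bound
  suffices h : ∃ c : ℝ≥0∞, c ≠ ∞ ∧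
      ∀ (M : E → ℂ) (r : ℝ), 0 < r → Measurable M →
        (∫⁻ x in ball (0 : E) r, (‖M x‖₊ : ℝ≥0∞) ^ s) ^ (1 / s)
          ≤ ENNReal.ofReal (r ^ ((n : ℝ) * (1 / s - 1 / p))) →
        (∫⁻ x in (ball (0 : E) r)ᶜ,
            (‖M x‖₊ : ℝ≥0∞) ^ s * ENNReal.ofReal (‖x‖ ^ l)) ^ (1 / s)
          ≤ ENNReal.ofReal (r ^ (l / s + (n : ℝ) * (1 / s - 1 / p))) →
        ∫⁻ x, (‖M x‖₊ : ℝ≥0∞) * ENNReal.ofReal (‖x‖ ^ Nr)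
          ≤ c * ENNReal.ofReal (r ^ T) by
    obtain ⟨c, hc, hbound⟩ := h
    refine ⟨c.toReal + 1, by positivity, fun M r hr hm h1 h2 => ?_⟩
    refine (hbound M r hr hm h1 h2).trans ?_
    rw [ENNReal.ofReal_mul (by positivity)]
    gcongr
    calc c = ENNReal.ofReal c.toReal := (ENNReal.ofReal_toReal hc).symm
      _ ≤ ENNReal.ofReal (c.toReal + 1) := ENNReal.ofReal_le_ofReal (by linarith)
  -- trivial case n = 0
  rcases Nat.eq_zero_or_pos n with hn | hn
  · subst hn
    refine ⟨1, one_ne_top, fun M r hr hm h1 h2 => ?_⟩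
    have hz : ∀ x : E, (‖M x‖₊ : ℝ≥0∞) * ENNReal.ofReal (‖x‖ ^ Nr) = 0 := by
      intro x
      have : (x : E) = 0 := Subsingleton.elim x 0
      rw [this]
      simp [Real.zero_rpow hNr0.ne']
    simp only [hz, lintegral_zero]
    exact zero_le
  have hn0 : (0:ℝ) < (n:ℝ) := by exact_mod_cast hn
  rcases eq_or_lt_of_le hs with hs1 | hs1
  · -- case s = 1
    subst hs1
    refine ⟨2, by norm_num, fun M r hr hm h1 h2 => ?_⟩
    simp only [one_div_one, ENNReal.rpow_one] at h1 h2
    have hfm : Measurable fun x : E => (‖M x‖₊ : ℝ≥0∞) := by fun_prop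
    have hNl : Nr < l := by
      simp only [div_one, one_div_one, sub_self, mul_zero, sub_zero] at hN
      exact hN
    rw [← lintegral_add_compl (μ := volume)
      (f := fun x : E => (‖M x‖₊ : ℝ≥0∞) * ENNReal.ofReal (‖x‖ ^ Nr))
      measurableSet_ball]
    have hin : ∫⁻ x in ball (0:E) r, (‖M x‖₊ : ℝ≥0∞) * ENNReal.ofReal (‖x‖ ^ Nr)
        ≤ ENNReal.ofReal (r ^ T) := by
      calc ∫⁻ x in ball (0:E) r, (‖M x‖₊ : ℝ≥0∞) * ENNReal.ofReal (‖x‖ ^ Nr)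
          ≤ ∫⁻ x in ball (0:E) r, ENNReal.ofReal (r ^ Nr) * (‖M x‖₊ : ℝ≥0∞) := by
            refine setLIntegral_mono' measurableSet_ball (fun x hx => ?_)
            have hx' : ‖x‖ < r := by simpa [mem_ball, dist_zero_right] using hx
            rw [mul_comm]
            exact mul_le_mul_left (ENNReal.ofReal_le_ofReal
              (Real.rpow_le_rpow (norm_nonneg x) hx'.le hNr0.le)) _
        _ = ENNReal.ofReal (r ^ Nr) * ∫⁻ x in ball (0:E) r, (‖M x‖₊ : ℝ≥0∞) :=
            lintegral_const_mul _ hfm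
        _ ≤ ENNReal.ofReal (r ^ Nr) * ENNReal.ofReal (r ^ ((n:ℝ) * (1 - 1/p))) :=
            mul_le_mul_right h1 _
        _ = ENNReal.ofReal (r ^ T) := by
            rw [← ENNReal.ofReal_mul (by positivity), ← Real.rpow_add hr]
            congr 1
            rw [hT]; ring
    have hout : ∫⁻ x in (ball (0:E) r)ᶜ, (‖M x‖₊ : ℝ≥0∞) * ENNReal.ofReal (‖x‖ ^ Nr)
        ≤ ENNReal.ofReal (r ^ T) := by
      calc ∫⁻ x in (ball (0:E) r)ᶜ, (‖M x‖₊ : ℝ≥0∞) * ENNReal.ofReal (‖x‖ ^ Nr)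
          ≤ ∫⁻ x in (ball (0:E) r)ᶜ,
              ((‖M x‖₊ : ℝ≥0∞) * ENNReal.ofReal (‖x‖ ^ l)) * ENNReal.ofReal (r ^ (Nr - l)) := by
            refine setLIntegral_mono' measurableSet_ball.compl (fun x hx => ?_)
            have hx' : r ≤ ‖x‖ := by
              simpa [mem_ball, dist_zero_right, not_lt] using hx
            have hx0 : (0:ℝ) < ‖x‖ := lt_of_lt_of_le hr hx'
            have hdec : ENNReal.ofReal (‖x‖ ^ Nr)
                = ENNReal.ofReal (‖x‖ ^ l) * ENNReal.ofReal (‖x‖ ^ (Nr - l)) := by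
              rw [← ENNReal.ofReal_mul (by positivity), ← Real.rpow_add hx0]
              congr 1
              ring
            rw [hdec, ← mul_assoc]
            exact mul_le_mul_right (ENNReal.ofReal_le_ofReal
              (Real.rpow_le_rpow_of_nonpos hr hx' (by linarith))) _
        _ = (∫⁻ x in (ball (0:E) r)ᶜ, (‖M x‖₊ : ℝ≥0∞) * ENNReal.ofReal (‖x‖ ^ l))
              * ENNReal.ofReal (r ^ (Nr - l)) := by
            rw [lintegral_mul_const _ (by fun_prop)]
        _ ≤ ENNReal.ofReal (r ^ (l/1 + (n:ℝ) * (1 - 1/p))) * ENNReal.ofReal (r ^ (Nr - l)) :=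
            mul_le_mul_left h2 _
        _ = ENNReal.ofReal (r ^ T) := by
            rw [← ENNReal.ofReal_mul (by positivity), ← Real.rpow_add hr]
            congr 1
            rw [hT]; ring
    calc _ ≤ ENNReal.ofReal (r ^ T) + ENNReal.ofReal (r ^ T) := add_le_add hin hout
      _ = 2 * ENNReal.ofReal (r ^ T) := by ring
  · -- case 1 < s
    set q : ℝ := s / (s - 1) with hq
    have hconj : s.HolderConjugate q := Real.HolderConjugate.conjExponent hs1
    have hq0 : 0 < q := hconj.symm.pos
    have hinv : 1/s + 1/q = 1 := by
      simpa [one_div] using hconj.inv_add_inv_eq_one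
    set v : ℝ≥0∞ := volume (ball (0:E) 1) with hv
    set a : ℝ := Nr - l / s with ha
    have haq : a * q < -(n:ℝ) := by
      have h1q : 1 - 1/s = 1/q := by linarith
      have : a < -(n:ℝ) * (1/q) := by
        rw [← h1q]; simp only [ha, hNr]; linarith [hN]
      calc a * q < (-(n:ℝ) * (1/q)) * q := mul_lt_mul_of_pos_right this hq0
        _ = -(n:ℝ) := by field_simp
    set K : ℝ≥0∞ := ∫⁻ y in (ball (0:E) 1)ᶜ, ENNReal.ofReal (‖y‖ ^ (a * q)) with hK
    have hKfin : K ≠ ∞ := tail_finite haq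
    refine ⟨v ^ (1/q) + K ^ (1/q), ?_, fun M r hr hm h1 h2 => ?_⟩
    · refine ENNReal.add_ne_top.2 ⟨?_, ?_⟩
      · exact (ENNReal.rpow_lt_top_of_nonneg (by positivity)
          (measure_ball_lt_top).ne).ne
      · exact (ENNReal.rpow_lt_top_of_nonneg (by positivity) hKfin).ne
    have hfm : Measurable fun x : E => (‖M x‖₊ : ℝ≥0∞) := by fun_prop
    rw [← lintegral_add_compl (μ := volume)
      (f := fun x : E => (‖M x‖₊ : ℝ≥0∞) * ENNReal.ofReal (‖x‖ ^ Nr))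
      measurableSet_ball]
    have hin : ∫⁻ x in ball (0:E) r, (‖M x‖₊ : ℝ≥0∞) * ENNReal.ofReal (‖x‖ ^ Nr)
        ≤ v ^ (1/q) * ENNReal.ofReal (r ^ T) := by
      have hhold := ENNReal.lintegral_mul_le_Lp_mul_Lq (volume.restrict (ball (0:E) r)) hconj
        (f := fun x : E => (‖M x‖₊ : ℝ≥0∞)) (g := fun _ => 1)
        hfm.aemeasurable aemeasurable_const
      simp only [Pi.mul_apply, mul_one, ENNReal.one_rpow, lintegral_one,
        Measure.restrict_apply MeasurableSet.univ, Set.univ_inter] at hhold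
      have hball : volume (ball (0:E) r) = ENNReal.ofReal (r ^ (n:ℕ)) * v := by
        rw [hv]
        simpa [finrank_euclideanSpace_fin] using
          Measure.addHaar_ball_of_pos (volume : Measure (EuclideanSpace ℝ (Fin n))) 0 hr
      have hvol : (volume (ball (0:E) r)) ^ (1/q)
          = ENNReal.ofReal (r ^ ((n:ℝ) * (1/q))) * v ^ (1/q) := by
        rw [hball, ENNReal.mul_rpow_of_nonneg _ _ (by positivity),
          ← Real.rpow_natCast r n,
          ENNReal.ofReal_rpow_of_pos (x := r ^ (n:ℝ)) (by positivity),
          ← Real.rpow_mul hr.le]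
      calc ∫⁻ x in ball (0:E) r, (‖M x‖₊ : ℝ≥0∞) * ENNReal.ofReal (‖x‖ ^ Nr)
          ≤ ∫⁻ x in ball (0:E) r, ENNReal.ofReal (r ^ Nr) * (‖M x‖₊ : ℝ≥0∞) := by
            refine setLIntegral_mono' measurableSet_ball (fun x hx => ?_)
            have hx' : ‖x‖ < r := by simpa [mem_ball, dist_zero_right] using hx
            rw [mul_comm]
            exact mul_le_mul_left (ENNReal.ofReal_le_ofReal
              (Real.rpow_le_rpow (norm_nonneg x) hx'.le hNr0.le)) _
        _ = ENNReal.ofReal (r ^ Nr) * ∫⁻ x in ball (0:E) r, (‖M x‖₊ : ℝ≥0∞) :=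
            lintegral_const_mul _ hfm
        _ ≤ ENNReal.ofReal (r ^ Nr) *
              (ENNReal.ofReal (r ^ ((n:ℝ) * (1/s - 1/p))) * (volume (ball (0:E) r)) ^ (1/q)) :=
            mul_le_mul_right (hhold.trans (mul_le_mul_left h1 _)) _
        _ ≤ v ^ (1/q) * ENNReal.ofReal (r ^ T) := by
            rw [hvol,
              show ENNReal.ofReal (r ^ Nr) * (ENNReal.ofReal (r ^ ((n:ℝ) * (1/s - 1/p))) *
                (ENNReal.ofReal (r ^ ((n:ℝ) * (1/q))) * v ^ (1/q)))
              = v ^ (1/q) * (ENNReal.ofReal (r ^ Nr) * ENNReal.ofReal (r ^ ((n:ℝ) * (1/s - 1/p)))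
                * ENNReal.ofReal (r ^ ((n:ℝ) * (1/q)))) from by ring]
            gcongr
            rw [← ENNReal.ofReal_mul (by positivity), ← ENNReal.ofReal_mul (by positivity),
              ← Real.rpow_add hr, ← Real.rpow_add hr]
            apply ENNReal.ofReal_le_ofReal
            apply le_of_eq
            congr 1
            have h1q : (n:ℝ) * (1/q) = (n:ℝ) * (1 - 1/s) := by
              rw [show (1:ℝ)/q = 1 - 1/s from by linarith]
            rw [h1q, hT, hNr]
            ring
    have hout : ∫⁻ x in (ball (0:E) r)ᶜ, (‖M x‖₊ : ℝ≥0∞) * ENNReal.ofReal (‖x‖ ^ Nr)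
        ≤ K ^ (1/q) * ENNReal.ofReal (r ^ T) := by
      set F : E → ℝ≥0∞ := fun x => (‖M x‖₊ : ℝ≥0∞) * ENNReal.ofReal (‖x‖ ^ (l/s)) with hF
      set G : E → ℝ≥0∞ := fun x => ENNReal.ofReal (‖x‖ ^ a) with hG
      have hFm : Measurable F := by fun_prop
      have hGm : Measurable G := by fun_prop
      have hsplit : ∫⁻ x in (ball (0:E) r)ᶜ, (‖M x‖₊ : ℝ≥0∞) * ENNReal.ofReal (‖x‖ ^ Nr)
          = ∫⁻ x in (ball (0:E) r)ᶜ, (F * G) x := by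
        refine setLIntegral_congr_fun measurableSet_ball.compl (fun x hx => ?_)
        have hx' : r ≤ ‖x‖ := by simpa [mem_ball, dist_zero_right, not_lt] using hx
        have hx0 : (0:ℝ) < ‖x‖ := lt_of_lt_of_le hr hx'
        simp only [Pi.mul_apply, hF, hG]
        rw [mul_assoc, ← ENNReal.ofReal_mul (by positivity), ← Real.rpow_add hx0]
        congr 2
        rw [ha]; ring
      have hhold := ENNReal.lintegral_mul_le_Lp_mul_Lq (volume.restrict (ball (0:E) r)ᶜ) hconj
        hFm.aemeasurable hGm.aemeasurable
      have hFs : ∫⁻ x in (ball (0:E) r)ᶜ, F x ^ s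
          = ∫⁻ x in (ball (0:E) r)ᶜ, (‖M x‖₊ : ℝ≥0∞) ^ s * ENNReal.ofReal (‖x‖ ^ l) := by
        refine setLIntegral_congr_fun measurableSet_ball.compl (fun x hx => ?_)
        have hx' : r ≤ ‖x‖ := by simpa [mem_ball, dist_zero_right, not_lt] using hx
        have hx0 : (0:ℝ) < ‖x‖ := lt_of_lt_of_le hr hx'
        simp only [hF]
        rw [ENNReal.mul_rpow_of_nonneg _ _ hs0.le,
          ENNReal.ofReal_rpow_of_pos (x := ‖x‖ ^ (l/s)) (by positivity),
          ← Real.rpow_mul hx0.le, div_mul_cancel₀ _ hs0.ne']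
      have hGq : ∫⁻ x in (ball (0:E) r)ᶜ, G x ^ q
          = ENNReal.ofReal (r ^ ((n:ℝ) + a * q)) * K := by
        rw [hK, ← tail_scale (a * q) hr]
        refine setLIntegral_congr_fun measurableSet_ball.compl (fun x hx => ?_)
        have hx' : r ≤ ‖x‖ := by simpa [mem_ball, dist_zero_right, not_lt] using hx
        have hx0 : (0:ℝ) < ‖x‖ := lt_of_lt_of_le hr hx'
        simp only [hG]
        rw [ENNReal.ofReal_rpow_of_pos (x := ‖x‖ ^ a) (by positivity),
          ← Real.rpow_mul hx0.le]
      calc ∫⁻ x in (ball (0:E) r)ᶜ, (‖M x‖₊ : ℝ≥0∞) * ENNReal.ofReal (‖x‖ ^ Nr)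
          ≤ (∫⁻ x in (ball (0:E) r)ᶜ, F x ^ s) ^ (1/s)
            * (∫⁻ x in (ball (0:E) r)ᶜ, G x ^ q) ^ (1/q) := by
            rw [hsplit]; exact hhold
        _ ≤ ENNReal.ofReal (r ^ (l/s + (n:ℝ) * (1/s - 1/p)))
            * (ENNReal.ofReal (r ^ ((n:ℝ) + a * q)) * K) ^ (1/q) := by
            gcongr
            · rw [hFs]; exact h2
            · rw [hGq]
        _ = K ^ (1/q) * ENNReal.ofReal (r ^ T) := by
            rw [ENNReal.mul_rpow_of_nonneg _ _ (by positivity),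
              ENNReal.ofReal_rpow_of_pos (x := r ^ ((n:ℝ) + a * q)) (by positivity),
              ← Real.rpow_mul hr.le,
              show ENNReal.ofReal (r ^ (l/s + (n:ℝ) * (1/s - 1/p))) *
                (ENNReal.ofReal (r ^ (((n:ℝ) + a * q) * (1/q))) * K ^ (1/q))
                = K ^ (1/q) * (ENNReal.ofReal (r ^ (l/s + (n:ℝ) * (1/s - 1/p))) *
                  ENNReal.ofReal (r ^ (((n:ℝ) + a * q) * (1/q)))) from by ring]
            congr 1
            rw [← ENNReal.ofReal_mul (by positivity), ← Real.rpow_add hr]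
            congr 1
            have h1q : (1:ℝ)/q = 1 - 1/s := by linarith
            have e1 : ((n:ℝ) + a * q) * (1/q) = (n:ℝ) * (1/q) + a := by
              field_simp
            rw [e1, h1q, ha, hT, hNr]
            ring
    calc _ ≤ v ^ (1/q) * ENNReal.ofReal (r ^ T) + K ^ (1/q) * ENNReal.ofReal (r ^ T) :=
          add_le_add hin hout
      _ = (v ^ (1/q) + K ^ (1/q)) * ENNReal.ofReal (r ^ T) := by ring
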